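/- arXiv:1212.6378 — 2 statements merged into one kernel-verified Lean document; each statement's English description precedes it below -/
import Mathlib

section
/- Let ρ be a 2d×2d SPPT state built from X₁, X₂, S with the SPPT condition, rank(X₁) = k, and reduced 2k×2k PPT state τ as in the rank-reduction construction. If τ is separable on ℂ²⊗ℂᵏ, then ρ is separable on ℂ²⊗ℂᵈ. -/
open Matrix Kronecker Finset ComplexOrder

set_option linter.unusedSectionVars false
set_option maxHeartbeats 1000000

/-- 2x2 block matrix with n×n blocks, indexed by `Fin 2 × n`. -/
def blk {n : Type*} (A B C D : Matrix n n ℂ) :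
    Matrix (Fin 2 × n) (Fin 2 × n) ℂ := fun p q =>
  if p.1 = 0 then (if q.1 = 0 then A p.2 q.2 else B p.2 q.2)
  else (if q.1 = 0 then C p.2 q.2 else D p.2 q.2)

/-- Partial transpose on the first (qubit) factor. -/
def ptA {n : Type*} (ρ : Matrix (Fin 2 × n) (Fin 2 × n) ℂ) :
    Matrix (Fin 2 × n) (Fin 2 × n) ℂ := fun p q => ρ (q.1, p.2) (p.1, q.2)

/-- Separability of an (unnormalized) state on ℂ²⊗ℂⁿ. -/
def SepState {n : Type*} [Fintype n] (ρ : Matrix (Fin 2 × n) (Fin 2 × n) ℂ) : Prop :=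
  ∃ (N : ℕ) (σ : Fin N → Matrix (Fin 2) (Fin 2) ℂ) (P : Fin N → Matrix n n ℂ),
    (∀ i, (σ i).PosSemidef) ∧ (∀ i, (P i).PosSemidef) ∧ ρ = ∑ i, σ i ⊗ₖ P i

section aux

variable {n : Type*} [Fintype n] [DecidableEq n]

lemma blk_conjTranspose (A B C D : Matrix n n ℂ) :
    (blk A B C D)ᴴ = blk Aᴴ Cᴴ Bᴴ Dᴴ := by
  ext ⟨a, x⟩ ⟨b, y⟩
  fin_cases a <;> fin_cases b <;>
    simp [blk, conjTranspose_apply]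

lemma blk_mul (A B C D A' B' C' D' : Matrix n n ℂ) :
    blk A B C D * blk A' B' C' D' =
      blk (A * A' + B * C') (A * B' + B * D') (C * A' + D * C') (C * B' + D * D') := by
  ext ⟨a, x⟩ ⟨b, y⟩
  rw [mul_apply]
  rw [Fintype.sum_prod_type]
  rw [Fin.sum_univ_two]
  fin_cases a <;> fin_cases b <;>
    simp [blk, mul_apply, Matrix.add_apply]

lemma blk_add (A B C D A' B' C' D' : Matrix n n ℂ) :
    blk A B C D + blk A' B' C' D' = blk (A + A') (B + B') (C + C') (D + D') := by
  ext ⟨a, x⟩ ⟨b, y⟩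
  fin_cases a <;> fin_cases b <;> simp [blk]

lemma one_kron (V : Matrix n n ℂ) :
    (1 : Matrix (Fin 2) (Fin 2) ℂ) ⊗ₖ V = blk V 0 0 V := by
  ext ⟨a, x⟩ ⟨b, y⟩
  fin_cases a <;> fin_cases b <;>
    simp [blk, Matrix.one_apply, kroneckerMap_apply]

lemma diag01_kron (M : Matrix n n ℂ) :
    (Matrix.diagonal (fun i : Fin 2 => if i = 1 then (1:ℂ) else 0)) ⊗ₖ M = blk 0 0 0 M := by
  ext ⟨a, x⟩ ⟨b, y⟩
  fin_cases a <;> fin_cases b <;>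
    simp [blk, Matrix.diagonal, kroneckerMap_apply]

end aux

section emb

variable {k m : ℕ}

/-- embed a k×k matrix in the top-left corner -/
def emb (P : Matrix (Fin k) (Fin k) ℂ) : Matrix (Fin k ⊕ Fin m) (Fin k ⊕ Fin m) ℂ :=
  Matrix.fromBlocks P 0 0 0

/-- embed a 2k×2k matrix blockwise -/
def Em (τ : Matrix (Fin 2 × Fin k) (Fin 2 × Fin k) ℂ) :
    Matrix (Fin 2 × (Fin k ⊕ Fin m)) (Fin 2 × (Fin k ⊕ Fin m)) ℂ := fun p q =>
  match p.2, q.2 with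
  | Sum.inl x, Sum.inl y => τ (p.1, x) (q.1, y)
  | _, _ => 0

lemma Em_sum {N : ℕ} (f : Fin N → Matrix (Fin 2 × Fin k) (Fin 2 × Fin k) ℂ) :
    (Em (∑ i, f i) : Matrix (Fin 2 × (Fin k ⊕ Fin m)) (Fin 2 × (Fin k ⊕ Fin m)) ℂ)
      = ∑ i, Em (f i) := by
  ext ⟨a, p⟩ ⟨b, q⟩
  cases p <;> cases q <;> simp [Em, Matrix.sum_apply]

lemma Em_kron (σ : Matrix (Fin 2) (Fin 2) ℂ) (P : Matrix (Fin k) (Fin k) ℂ) :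
    (Em (σ ⊗ₖ P) : Matrix (Fin 2 × (Fin k ⊕ Fin m)) (Fin 2 × (Fin k ⊕ Fin m)) ℂ)
      = σ ⊗ₖ emb P := by
  ext ⟨a, p⟩ ⟨b, q⟩
  cases p <;> cases q <;> simp [Em, emb, kroneckerMap_apply, Matrix.fromBlocks]

lemma Em_blk (A B C D : Matrix (Fin k) (Fin k) ℂ) :
    (Em (blk A B C D) : Matrix (Fin 2 × (Fin k ⊕ Fin m)) (Fin 2 × (Fin k ⊕ Fin m)) ℂ)
      = blk (emb A) (emb B) (emb C) (emb D) := by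
  ext ⟨a, p⟩ ⟨b, q⟩
  fin_cases a <;> fin_cases b <;> cases p <;> cases q <;>
    simp [Em, blk, emb, Matrix.fromBlocks]

lemma emb_posSemidef {P : Matrix (Fin k) (Fin k) ℂ} (hP : P.PosSemidef) :
    (emb P : Matrix (Fin k ⊕ Fin m) (Fin k ⊕ Fin m) ℂ).PosSemidef := by
  have : (emb P : Matrix (Fin k ⊕ Fin m) (Fin k ⊕ Fin m) ℂ)
      = (Matrix.fromRows (1 : Matrix (Fin k) (Fin k) ℂ) (0 : Matrix (Fin m) (Fin k) ℂ)) * P *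
        (Matrix.fromRows (1 : Matrix (Fin k) (Fin k) ℂ) (0 : Matrix (Fin m) (Fin k) ℂ))ᴴ := by
    rw [Matrix.conjTranspose_fromRows_eq_fromCols_conjTranspose]
    rw [Matrix.fromRows_mul, Matrix.fromRows_mul_fromCols]
    simp [emb]
  rw [this]
  exact hP.mul_mul_conjTranspose_same _

end emb

theorem stmt10 {k m : ℕ}
    (U V : Matrix (Fin k ⊕ Fin m) (Fin k ⊕ Fin m) ℂ)
    (hU : U ∈ Matrix.unitaryGroup (Fin k ⊕ Fin m) ℂ)
    (hV : V ∈ Matrix.unitaryGroup (Fin k ⊕ Fin m) ℂ)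
    (σv : Fin k → ℝ) (hσ : ∀ i, 0 < σv i)
    (Dk : Matrix (Fin k) (Fin k) ℂ) (hDk : Dk = Matrix.diagonal (fun i => (σv i : ℂ)))
    (X₁ X₂ S : Matrix (Fin k ⊕ Fin m) (Fin k ⊕ Fin m) ℂ)
    (hX₁ : X₁ = U * Matrix.fromBlocks Dk 0 0 0 * Vᴴ)
    (hsppt : X₁ᴴ * Sᴴ * S * X₁ = X₁ᴴ * S * Sᴴ * X₁)
    (St : Matrix (Fin k ⊕ Fin m) (Fin k ⊕ Fin m) ℂ) (hSt : St = Uᴴ * S * U)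
    (τ : Matrix (Fin 2 × Fin k) (Fin 2 × Fin k) ℂ)
    (hτ : τ = blk (Dk * Dk) (Dk * St.toBlocks₁₁ * Dk) (Dk * St.toBlocks₁₁ᴴ * Dk)
        (Dk * (St.toBlocks₁₁ᴴ * St.toBlocks₁₁ + St.toBlocks₂₁ᴴ * St.toBlocks₂₁) * Dk))
    (ρ : Matrix (Fin 2 × (Fin k ⊕ Fin m)) (Fin 2 × (Fin k ⊕ Fin m)) ℂ)
    (hρ : ρ = (blk X₁ (S * X₁) 0 X₂)ᴴ * blk X₁ (S * X₁) 0 X₂)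
    (hsep : SepState τ) :
    SepState ρ := by
  obtain ⟨N, σ, P, hσpsd, hPpsd, hτeq⟩ := hsep
  -- unitarity facts
  have hUU : Uᴴ * U = 1 := by
    simpa [Matrix.star_eq_conjTranspose] using hU.1
  have hUUc : U * Uᴴ = 1 := by
    simpa [Matrix.star_eq_conjTranspose] using hU.2
  have hVV : Vᴴ * V = 1 := by
    simpa [Matrix.star_eq_conjTranspose] using hV.1
  have hDkH : Dkᴴ = Dk := by
    rw [hDk]
    simp [Matrix.diagonal_conjTranspose, Pi.star_def, Complex.conj_ofReal]
  set F : Matrix (Fin k ⊕ Fin m) (Fin k ⊕ Fin m) ℂ := Matrix.fromBlocks Dk 0 0 0 with hF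
  have key : ∀ M : Matrix (Fin k ⊕ Fin m) (Fin k ⊕ Fin m) ℂ,
      (U * F * Vᴴ)ᴴ * M * (U * F * Vᴴ) = V * (Fᴴ * (Uᴴ * M * U) * F) * Vᴴ := by
    intro M
    simp [Matrix.conjTranspose_mul, Matrix.mul_assoc]
  have hFMF : ∀ (A B C D : _),
      Fᴴ * Matrix.fromBlocks A B C D * F = (emb (Dk * A * Dk) : Matrix (Fin k ⊕ Fin m) (Fin k ⊕ Fin m) ℂ) := by
    intro A B C D
    rw [hF]
    rw [Matrix.fromBlocks_conjTranspose, Matrix.fromBlocks_multiply, Matrix.fromBlocks_multiply]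
    simp [emb, hDkH, Matrix.mul_assoc]
  set A := St.toBlocks₁₁ with hA
  set C := St.toBlocks₂₁ with hC
  have hStb : St = Matrix.fromBlocks A St.toBlocks₁₂ C St.toBlocks₂₂ := (Matrix.fromBlocks_toBlocks St).symm
  have hStH : Stᴴ = Uᴴ * Sᴴ * U := by
    rw [hSt]; simp [Matrix.conjTranspose_mul, Matrix.mul_assoc]
  have hStHb : Stᴴ = Matrix.fromBlocks Aᴴ Cᴴ St.toBlocks₁₂ᴴ St.toBlocks₂₂ᴴ := by
    conv_lhs => rw [hStb]
    rw [Matrix.fromBlocks_conjTranspose]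
  have hcancel : ∀ x : Matrix (Fin k ⊕ Fin m) (Fin k ⊕ Fin m) ℂ, U * (Uᴴ * x) = x := by
    intro x; rw [← Matrix.mul_assoc, hUUc, Matrix.one_mul]
  -- the four block identities
  have g1 : X₁ᴴ * X₁ = V * emb (Dk * Dk) * Vᴴ := by
    have h := key 1
    rw [Matrix.mul_one, Matrix.mul_one, hUU] at h
    rw [hX₁, h]
    have : Fᴴ * (1 * F) = Fᴴ * F := by rw [Matrix.one_mul]
    rw [Matrix.mul_assoc Fᴴ 1 F] at h ⊢
    rw [this]
    congr 1
    congr 1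
    rw [hF, Matrix.fromBlocks_conjTranspose, Matrix.fromBlocks_multiply]
    simp [emb, hDkH]
  have g2 : X₁ᴴ * (S * X₁) = V * emb (Dk * A * Dk) * Vᴴ := by
    rw [hX₁, ← Matrix.mul_assoc, key S, ← hSt]
    rw [hStb, hFMF]
  have g3 : (S * X₁)ᴴ * X₁ = V * emb (Dk * Aᴴ * Dk) * Vᴴ := by
    rw [hX₁, Matrix.conjTranspose_mul, key Sᴴ, ← hStH, hStHb, hFMF]
  have g4 : (S * X₁)ᴴ * (S * X₁) = V * emb (Dk * (Aᴴ * A + Cᴴ * C) * Dk) * Vᴴ := by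
    have hSS : Uᴴ * (Sᴴ * S) * U = Stᴴ * St := by
      rw [hStH, hSt]
      simp [Matrix.mul_assoc, hcancel]
    rw [hX₁, Matrix.conjTranspose_mul, Matrix.mul_assoc,
      ← Matrix.mul_assoc Sᴴ S, ← Matrix.mul_assoc (U * F * Vᴴ)ᴴ (Sᴴ * S), key (Sᴴ * S), hSS]
    rw [hStHb]
    conv_lhs => rw [hStb]
    rw [Matrix.fromBlocks_multiply, hFMF]
  -- the witnesses
  refine ⟨N + 1,
    Fin.snoc σ (Matrix.diagonal (fun i : Fin 2 => if i = 1 then (1:ℂ) else 0)),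
    Fin.snoc (fun i => V * emb (P i) * Vᴴ) (X₂ᴴ * X₂), ?_, ?_, ?_⟩
  · intro i
    refine Fin.lastCases ?_ (fun j => ?_) i
    · rw [Fin.snoc_last]
      refine Matrix.posSemidef_diagonal_iff.mpr fun j => ?_
      split <;> norm_num
    · rw [Fin.snoc_castSucc]
      exact hσpsd j
  · intro i
    refine Fin.lastCases ?_ (fun j => ?_) i
    · rw [Fin.snoc_last]
      exact Matrix.posSemidef_conjTranspose_mul_self X₂
    · rw [Fin.snoc_castSucc]
      exact (emb_posSemidef (hPpsd j)).mul_mul_conjTranspose_same V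
  · rw [Fin.sum_univ_castSucc]
    simp only [Fin.snoc_castSucc, Fin.snoc_last]
    have h1 : ∑ i, σ i ⊗ₖ (V * emb (P i) * Vᴴ)
        = ((1 : Matrix (Fin 2) (Fin 2) ℂ) ⊗ₖ V) * Em τ * ((1 : Matrix (Fin 2) (Fin 2) ℂ) ⊗ₖ Vᴴ) := by
      rw [hτeq, Em_sum, Finset.mul_sum, Finset.sum_mul]
      refine Finset.sum_congr rfl fun i _ => ?_
      rw [Em_kron, ← Matrix.mul_kronecker_mul, ← Matrix.mul_kronecker_mul,
        Matrix.one_mul, Matrix.mul_one]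
    rw [h1, hτ, Em_blk, one_kron, one_kron, blk_mul, blk_mul, diag01_kron, blk_add,
      hρ, blk_conjTranspose, blk_mul]
    simp only [Matrix.zero_mul, Matrix.mul_zero, Matrix.conjTranspose_zero, add_zero, zero_add]
    rw [g1, g2, g3, g4]
end

section
/- Let ρ₁₁ = [[3,0,0],[0,4,2],[0,2,3]], ρ₁₂ = [[0,0,0],[0,0,1],[1,−1,0]], ρ₂₂ = [[2,1,−1],[1,6,1],[−1,1,3]], and ϱ₁ = [[ρ₁₁, ρ₁₂],[ρ₁₂†, ρ₂₂]]. Then ρ₁₁, ρ₂₂, ρ₂₂ − ρ₁₂†ρ₁₁⁻¹ρ₁₂, and ρ₂₂ − ρ₁₂ρ₁₁⁻¹ρ₁₂† are all positive definite; hence ϱ₁ is a 2⊗3 PPT state. -/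
open Matrix Kronecker Finset ComplexOrder

set_option maxHeartbeats 4000000

lemma psd_of_ldl {n : Type*} [Fintype n] [DecidableEq n] {M U : Matrix n n ℂ} {d : n → ℂ}
    (hM : M = Uᴴ * Matrix.diagonal d * U) (hd : ∀ i, 0 ≤ d i) : M.PosSemidef :=
  hM ▸ (Matrix.PosSemidef.diagonal hd).conjTranspose_mul_mul_same U

lemma posDef_of_psd_det {n : Type*} [Fintype n] [DecidableEq n] {M : Matrix n n ℂ}
    (hM : M.PosSemidef) (hdet : M.det ≠ 0) : M.PosDef := by
  exact hM.posDef_iff_isUnit.mpr ((isUnit_iff_isUnit_det M).mpr (isUnit_iff_ne_zero.mpr hdet))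

lemma ptA_blk (A B C D : Matrix (Fin 3) (Fin 3) ℂ) :
    ptA (blk A B C D) = blk A C B D := by
  ext ⟨i, x⟩ ⟨j, y⟩
  fin_cases i <;> fin_cases j <;> simp [ptA, blk]

theorem stmt15 (ρ₁₁ ρ₁₂ ρ₂₂ : Matrix (Fin 3) (Fin 3) ℂ)
    (h11 : ρ₁₁ = !![3, 0, 0; 0, 4, 2; 0, 2, 3])
    (h12 : ρ₁₂ = !![0, 0, 0; 0, 0, 1; 1, -1, 0])
    (h22 : ρ₂₂ = !![2, 1, -1; 1, 6, 1; -1, 1, 3]) :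
    ρ₁₁.PosDef ∧ ρ₂₂.PosDef ∧
    (ρ₂₂ - ρ₁₂ᴴ * ρ₁₁⁻¹ * ρ₁₂).PosDef ∧
    (ρ₂₂ - ρ₁₂ * ρ₁₁⁻¹ * ρ₁₂ᴴ).PosDef ∧
    (blk ρ₁₁ ρ₁₂ ρ₁₂ᴴ ρ₂₂).PosSemidef ∧
    (ptA (blk ρ₁₁ ρ₁₂ ρ₁₂ᴴ ρ₂₂)).PosSemidef := by
  subst h11 h12 h22
  have h12c : (!![0, 0, 0; 0, 0, 1; 1, -1, 0] : Matrix (Fin 3) (Fin 3) ℂ)ᴴ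
      = !![0, 0, 1; 0, 0, -1; 0, 1, 0] := by
    ext i j
    fin_cases i <;> fin_cases j <;> simp [conjTranspose_apply, vecHead, vecTail]
  have hinv : (!![3, 0, 0; 0, 4, 2; 0, 2, 3] : Matrix (Fin 3) (Fin 3) ℂ)⁻¹
      = !![1/3, 0, 0; 0, 3/8, -1/4; 0, -1/4, 1/2] := by
    apply inv_eq_right_inv
    ext i j
    fin_cases i <;> fin_cases j <;>
      simp [mul_apply, Fin.sum_univ_three, one_apply, vecHead, vecTail] <;> norm_num
  have key : ∀ (M U : Matrix (Fin 3) (Fin 3) ℂ) (d : Fin 3 → ℂ),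
      M = Uᴴ * Matrix.diagonal d * U → (∀ i, 0 ≤ d i) → M.det ≠ 0 → M.PosDef :=
    fun M U d h hd hdet => posDef_of_psd_det (psd_of_ldl h hd) hdet
  refine ⟨?_, ?_, ?_, ?_, ?_, ?_⟩
  · refine key _ !![1,0,0; 0,1,1/2; 0,0,1] ![3,4,2] ?_ ?_ ?_
    · ext i j
      fin_cases i <;> fin_cases j <;>
        simp [mul_apply, Fin.sum_univ_three, diagonal_apply, conjTranspose_apply,
          vecHead, vecTail, map_div₀, map_ofNat] <;> norm_num
    · intro i; fin_cases i <;> rw [Complex.le_def] <;> norm_num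
    · rw [det_fin_three]; simp [vecHead, vecTail]; norm_num
  · refine key _ !![1,1/2,-1/2; 0,1,3/11; 0,0,1] ![2,11/2,23/11] ?_ ?_ ?_
    · ext i j
      fin_cases i <;> fin_cases j <;>
        simp [mul_apply, Fin.sum_univ_three, diagonal_apply, conjTranspose_apply,
          vecHead, vecTail, map_div₀, map_ofNat] <;> norm_num
    · intro i; fin_cases i <;> rw [Complex.le_def] <;> norm_num
    · rw [det_fin_three]; simp [vecHead, vecTail]; norm_num
  · have hS : !![2, 1, -1; 1, 6, 1; -1, 1, 3]
        - (!![0, 0, 0; 0, 0, 1; 1, -1, 0] : Matrix (Fin 3) (Fin 3) ℂ)ᴴ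
          * (!![3, 0, 0; 0, 4, 2; 0, 2, 3] : Matrix (Fin 3) (Fin 3) ℂ)⁻¹
          * !![0, 0, 0; 0, 0, 1; 1, -1, 0]
        = !![3/2, 3/2, -3/4; 3/2, 11/2, 3/4; -3/4, 3/4, 21/8] := by
      rw [hinv, h12c]
      ext i j
      fin_cases i <;> fin_cases j <;>
        simp [mul_apply, Fin.sum_univ_three, Matrix.sub_apply, vecHead, vecTail] <;> norm_num
    rw [hS]
    refine key _ !![1,1,-1/2; 0,1,3/8; 0,0,1] ![3/2,4,27/16] ?_ ?_ ?_
    · ext i j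
      fin_cases i <;> fin_cases j <;>
        simp [mul_apply, Fin.sum_univ_three, diagonal_apply, conjTranspose_apply,
          vecHead, vecTail, map_div₀, map_ofNat] <;> norm_num
    · intro i; fin_cases i <;> rw [Complex.le_def] <;> norm_num
    · rw [det_fin_three]; simp [vecHead, vecTail]; norm_num
  · have hS : !![2, 1, -1; 1, 6, 1; -1, 1, 3]
        - !![0, 0, 0; 0, 0, 1; 1, -1, 0]
          * (!![3, 0, 0; 0, 4, 2; 0, 2, 3] : Matrix (Fin 3) (Fin 3) ℂ)⁻¹
          * (!![0, 0, 0; 0, 0, 1; 1, -1, 0] : Matrix (Fin 3) (Fin 3) ℂ)ᴴ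
        = !![2, 1, -1; 1, 11/2, 3/4; -1, 3/4, 55/24] := by
      rw [hinv, h12c]
      ext i j
      fin_cases i <;> fin_cases j <;>
        simp [mul_apply, Fin.sum_univ_three, Matrix.sub_apply, vecHead, vecTail] <;> norm_num
    rw [hS]
    refine key _ !![1,1/2,-1/2; 0,1,1/4; 0,0,1] ![2,5,71/48] ?_ ?_ ?_
    · ext i j
      fin_cases i <;> fin_cases j <;>
        simp [mul_apply, Fin.sum_univ_three, diagonal_apply, conjTranspose_apply,
          vecHead, vecTail, map_div₀, map_ofNat] <;> norm_num
    · intro i; fin_cases i <;> rw [Complex.le_def] <;> norm_num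
    · rw [det_fin_three]; simp [vecHead, vecTail]; norm_num
  · refine psd_of_ldl (U := blk !![1,0,0; 0,1,1/2; 0,0,1] !![0,0,0; 0,0,1/4; 1/2,-1/2,-1/4]
        0 !![1,1,-1/2; 0,1,3/8; 0,0,1])
      (d := fun p => if p.1 = 0 then ![3,4,2] p.2 else ![3/2,4,27/16] p.2) ?_ ?_
    · ext ⟨i, x⟩ ⟨j, y⟩
      fin_cases i <;> fin_cases j <;> fin_cases x <;> fin_cases y <;>
        simp [blk, mul_apply, Fintype.sum_prod_type, Fin.sum_univ_two, Fin.sum_univ_three,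
          diagonal_apply, conjTranspose_apply, h12c, vecHead, vecTail,
          map_div₀, map_ofNat] <;> norm_num
    · rintro ⟨i, x⟩
      fin_cases i <;> fin_cases x <;> simp <;> rw [Complex.le_def] <;> norm_num
  · rw [ptA_blk]
    refine psd_of_ldl (U := blk !![1,0,0; 0,1,1/2; 0,0,1] !![0,0,1/3; 0,0,-1/4; 0,1/2,1/4]
        0 !![1,1/2,-1/2; 0,1,1/4; 0,0,1])
      (d := fun p => if p.1 = 0 then ![3,4,2] p.2 else ![2,5,71/48] p.2) ?_ ?_
    · ext ⟨i, x⟩ ⟨j, y⟩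
      fin_cases i <;> fin_cases j <;> fin_cases x <;> fin_cases y <;>
        simp [blk, mul_apply, Fintype.sum_prod_type, Fin.sum_univ_two, Fin.sum_univ_three,
          diagonal_apply, conjTranspose_apply, h12c, vecHead, vecTail,
          map_div₀, map_ofNat] <;> norm_num
    · rintro ⟨i, x⟩
      fin_cases i <;> fin_cases x <;> simp <;> rw [Complex.le_def] <;> norm_num
end
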